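/- arXiv:math/0602097 — 2 statements merged into one kernel-verified Lean document; each statement's English description precedes it below -/
import Mathlib

section
/- Let A be an invertible real symmetric m×m matrix with signature (σ⁺₁, σ⁻₁), C an invertible real symmetric n×n matrix with signature (σ⁺₂, σ⁻₂), B a real g×m matrix, and D a real g×n matrix. Then the symmetric block matrix T = [A, Bᵀ, 0, 0; B, B A⁻¹ Bᵀ, -I, 0; 0, -I, D C⁻¹ Dᵀ, D; 0, 0, Dᵀ, C] has signature (σ⁺₁ + σ⁺₂ + g, σ⁻₁ + σ⁻₂ + g). -/
open Matrix

noncomputable def posEigCount {n : Type*} [Fintype n] [DecidableEq n]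
    {M : Matrix n n ℝ} (hM : M.IsHermitian) : ℕ :=
  (Finset.univ.filter fun i => 0 < hM.eigenvalues i).card

noncomputable def negEigCount {n : Type*} [Fintype n] [DecidableEq n]
    {M : Matrix n n ℝ} (hM : M.IsHermitian) : ℕ :=
  (Finset.univ.filter fun i => hM.eigenvalues i < 0).card

/-- The block matrix `[A, Bᵀ, 0, 0; B, BA⁻¹Bᵀ, -I, 0; 0, -I, DC⁻¹Dᵀ, D; 0, 0, Dᵀ, C]`. -/
noncomputable def glueMatrix {m n g : ℕ}
    (A : Matrix (Fin m) (Fin m) ℝ) (C : Matrix (Fin n) (Fin n) ℝ)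
    (B : Matrix (Fin g) (Fin m) ℝ) (D : Matrix (Fin g) (Fin n) ℝ) :
    Matrix ((Fin m ⊕ Fin g) ⊕ (Fin g ⊕ Fin n)) ((Fin m ⊕ Fin g) ⊕ (Fin g ⊕ Fin n)) ℝ :=
  Matrix.fromBlocks
    (Matrix.fromBlocks A Bᵀ B (B * A⁻¹ * Bᵀ))
    (Matrix.fromBlocks 0 0 (-1) 0)
    (Matrix.fromBlocks 0 (-1) 0 0)
    (Matrix.fromBlocks (D * C⁻¹ * Dᵀ) D Dᵀ C)

section Aux

open Finset

variable {ι κ : Type*} [Fintype ι] [Fintype κ] [DecidableEq ι] [DecidableEq κ]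

/-- One inequality in Sylvester's law of inertia for diagonal real matrices. -/
lemma sylvester_count_le (d : ι → ℝ) (e : κ → ℝ) (P : Matrix ι κ ℝ)
    (h : Matrix.diagonal e = Pᵀ * Matrix.diagonal d * P) :
    (univ.filter fun j => 0 < e j).card ≤ (univ.filter fun i => 0 < d i).card := by
  classical
  set ext : ({j : κ // 0 < e j} → ℝ) → (κ → ℝ) :=
    fun y j => if h : 0 < e j then y ⟨j, h⟩ else 0 with hext
  have hextadd : ∀ y z, ext (y + z) = ext y + ext z := by
    intro y z; funext j; by_cases hj : 0 < e j <;> simp [hext, hj]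
  have hextsmul : ∀ (c : ℝ) y, ext (c • y) = c • ext y := by
    intro c y; funext j; by_cases hj : 0 < e j <;> simp [hext, hj]
  let L : ({j : κ // 0 < e j} → ℝ) →ₗ[ℝ] ({i : ι // 0 < d i} → ℝ) :=
    { toFun := fun y i => (P *ᵥ ext y) i.1
      map_add' := by intro y z; funext i; simp [hextadd, Matrix.mulVec_add]
      map_smul' := by intro c y; funext i; simp [hextsmul, Matrix.mulVec_smul] }
  have hinj : Function.Injective L := by
    rw [← LinearMap.ker_eq_bot, LinearMap.ker_eq_bot']
    intro y hy
    by_contra hy0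
    obtain ⟨j0, hj0⟩ : ∃ j, y j ≠ 0 := by
      by_contra hc; push_neg at hc; exact hy0 (funext hc)
    set x := ext y with hx
    have hq : x ⬝ᵥ (Matrix.diagonal e) *ᵥ x = (P *ᵥ x) ⬝ᵥ (Matrix.diagonal d) *ᵥ (P *ᵥ x) := by
      rw [h]
      rw [← Matrix.mulVec_mulVec, ← Matrix.mulVec_mulVec, Matrix.dotProduct_mulVec,
        Matrix.vecMul_transpose, Matrix.dotProduct_mulVec]
    have hpos : 0 < x ⬝ᵥ (Matrix.diagonal e) *ᵥ x := by
      rw [dotProduct]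
      apply Finset.sum_pos'
      · intro j _
        simp only [Matrix.mulVec_diagonal, hx, hext]
        by_cases hj : 0 < e j
        · simp only [dif_pos hj]
          nlinarith [mul_self_nonneg (y ⟨j, hj⟩), hj]
        · simp [dif_neg hj]
      · refine ⟨j0.1, Finset.mem_univ _, ?_⟩
        simp only [Matrix.mulVec_diagonal, hx, hext, dif_pos j0.2, Subtype.coe_eta]
        have h1 : (0:ℝ) < e j0.1 := j0.2
        have h2 : 0 < e j0.1 * (y j0 * y j0) := mul_pos h1 (mul_self_pos.mpr hj0)
        nlinarith [h2]
    have hnonpos : (P *ᵥ x) ⬝ᵥ (Matrix.diagonal d) *ᵥ (P *ᵥ x) ≤ 0 := by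
      rw [dotProduct]
      apply Finset.sum_nonpos
      intro i _
      simp only [Matrix.mulVec_diagonal]
      by_cases hi : 0 < d i
      · have h0 : (P *ᵥ x) i = 0 := congrFun hy ⟨i, hi⟩
        rw [h0]; simp
      · push_neg at hi
        nlinarith [mul_self_nonneg ((P *ᵥ x) i), hi]
    linarith [hq ▸ hpos, hnonpos]
  have := LinearMap.finrank_le_finrank_of_injective hinj
  rwa [Module.finrank_fintype_fun_eq_card, Module.finrank_fintype_fun_eq_card,
    Fintype.card_subtype, Fintype.card_subtype] at this

lemma neg_filter (e : ι → ℝ) :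
    (univ.filter fun j => e j < 0) = (univ.filter fun j => 0 < -e j) := by
  ext j; simp [neg_pos]

/-- Sylvester's law of inertia for congruent diagonal real matrices. -/
lemma sylvester_counts_eq (d e : ι → ℝ) (P Q : Matrix ι ι ℝ)
    (hPQ : P * Q = 1) (h : Matrix.diagonal e = Pᵀ * Matrix.diagonal d * P) :
    ((univ.filter fun j => 0 < e j).card = (univ.filter fun i => 0 < d i).card ∧
     (univ.filter fun j => e j < 0).card = (univ.filter fun i => d i < 0).card) := by
  have hrev : Matrix.diagonal d = Qᵀ * Matrix.diagonal e * Q := by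
    rw [h]
    have hassoc : Qᵀ * (Pᵀ * Matrix.diagonal d * P) * Q
        = (P * Q)ᵀ * Matrix.diagonal d * (P * Q) := by
      simp only [Matrix.transpose_mul, Matrix.mul_assoc]
    rw [hassoc, hPQ]
    simp
  have hneg : ∀ (u v : ι → ℝ) (R : Matrix ι ι ℝ),
      Matrix.diagonal v = Rᵀ * Matrix.diagonal u * R →
      Matrix.diagonal (fun j => -v j) = Rᵀ * Matrix.diagonal (fun i => -u i) * R := by
    intro u v R hR
    have h1 : Matrix.diagonal (fun j => -v j) = -(Matrix.diagonal v) := by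
      rw [← Matrix.diagonal_neg]
    have h2 : Matrix.diagonal (fun i => -u i) = -(Matrix.diagonal u) := by
      rw [← Matrix.diagonal_neg]
    rw [h1, h2, hR, Matrix.mul_neg, Matrix.neg_mul]
  constructor
  · exact le_antisymm (sylvester_count_le d e P h) (sylvester_count_le e d Q hrev)
  · rw [neg_filter e, neg_filter d]
    exact le_antisymm
      (sylvester_count_le _ _ P (hneg d e P h))
      (sylvester_count_le _ _ Q (hneg e d Q hrev))

end Aux

theorem stmt_5 (m n g : ℕ)
    (A : Matrix (Fin m) (Fin m) ℝ) (hA : A.IsHermitian) (hAu : IsUnit A.det)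
    (C : Matrix (Fin n) (Fin n) ℝ) (hC : C.IsHermitian) (hCu : IsUnit C.det)
    (B : Matrix (Fin g) (Fin m) ℝ) (D : Matrix (Fin g) (Fin n) ℝ)
    (hT : (glueMatrix A C B D).IsHermitian) :
    posEigCount hT = posEigCount hA + posEigCount hC + g ∧
    negEigCount hT = negEigCount hA + negEigCount hC + g := by
  classical
  set T := glueMatrix A C B D with hTdef
  set a := hA.eigenvalues with ha
  set c := hC.eigenvalues with hc
  -- symmetry facts
  have hAs : Aᵀ = A := by rw [← Matrix.conjTranspose_eq_transpose_of_trivial]; exact hA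
  have hCs : Cᵀ = C := by rw [← Matrix.conjTranspose_eq_transpose_of_trivial]; exact hC
  have hAinv1 : A * A⁻¹ = 1 := Matrix.mul_nonsing_inv A hAu
  have hAinv2 : A⁻¹ * A = 1 := Matrix.nonsing_inv_mul A hAu
  have hCinv1 : C * C⁻¹ = 1 := Matrix.mul_nonsing_inv C hCu
  have hCinv2 : C⁻¹ * C = 1 := Matrix.nonsing_inv_mul C hCu
  have hAit : A⁻¹ᵀ = A⁻¹ := by rw [Matrix.transpose_nonsing_inv, hAs]
  have hCit : C⁻¹ᵀ = C⁻¹ := by rw [Matrix.transpose_nonsing_inv, hCs]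
  have hA1 : ∀ (X : Matrix (Fin m) (Fin g) ℝ), A * (A⁻¹ * X) = X := fun X => by
    rw [← Matrix.mul_assoc, hAinv1, Matrix.one_mul]
  have hA2 : ∀ (X : Matrix (Fin m) (Fin g) ℝ), A⁻¹ * (A * X) = X := fun X => by
    rw [← Matrix.mul_assoc, hAinv2, Matrix.one_mul]
  have hC1 : ∀ (X : Matrix (Fin n) (Fin g) ℝ), C * (C⁻¹ * X) = X := fun X => by
    rw [← Matrix.mul_assoc, hCinv1, Matrix.one_mul]
  have hC2 : ∀ (X : Matrix (Fin n) (Fin g) ℝ), C⁻¹ * (C * X) = X := fun X => by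
    rw [← Matrix.mul_assoc, hCinv2, Matrix.one_mul]
  -- unitary diagonalizations
  set UA : Matrix (Fin m) (Fin m) ℝ := (hA.eigenvectorUnitary : Matrix (Fin m) (Fin m) ℝ)
    with hUAdef
  set UC : Matrix (Fin n) (Fin n) ℝ := (hC.eigenvectorUnitary : Matrix (Fin n) (Fin n) ℝ)
    with hUCdef
  set W : Matrix ((Fin m ⊕ Fin g) ⊕ (Fin g ⊕ Fin n)) ((Fin m ⊕ Fin g) ⊕ (Fin g ⊕ Fin n)) ℝ :=
    (hT.eigenvectorUnitary :
      Matrix ((Fin m ⊕ Fin g) ⊕ (Fin g ⊕ Fin n)) ((Fin m ⊕ Fin g) ⊕ (Fin g ⊕ Fin n)) ℝ)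
    with hWdef
  have hstar : ∀ {k : Type} [Fintype k] [DecidableEq k] (M : Matrix k k ℝ),
      star M = Mᵀ := fun M => Matrix.conjTranspose_eq_transpose_of_trivial M
  have hUA1 : UAᵀ * UA = 1 := by
    rw [← hstar UA]; exact Matrix.mem_unitaryGroup_iff'.mp hA.eigenvectorUnitary.2
  have hUA2 : UA * UAᵀ = 1 := by
    rw [← hstar UA]; exact Matrix.mem_unitaryGroup_iff.mp hA.eigenvectorUnitary.2
  have hUC1 : UCᵀ * UC = 1 := by
    rw [← hstar UC]; exact Matrix.mem_unitaryGroup_iff'.mp hC.eigenvectorUnitary.2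
  have hUC2 : UC * UCᵀ = 1 := by
    rw [← hstar UC]; exact Matrix.mem_unitaryGroup_iff.mp hC.eigenvectorUnitary.2
  have hW1 : Wᵀ * W = 1 := by
    rw [← hstar W]; exact Matrix.mem_unitaryGroup_iff'.mp hT.eigenvectorUnitary.2
  have hW2 : W * Wᵀ = 1 := by
    rw [← hstar W]; exact Matrix.mem_unitaryGroup_iff.mp hT.eigenvectorUnitary.2
  have hofReal : ∀ {k : Type} (f : k → ℝ), (RCLike.ofReal ∘ f : k → ℝ) = f := by
    intro k f; funext i; simp
  have hspecA : A = UA * Matrix.diagonal a * UAᵀ := by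
    conv_lhs => rw [hA.spectral_theorem]
    rw [hofReal, Unitary.conjStarAlgAut_apply, hstar]
  have hspecC : C = UC * Matrix.diagonal c * UCᵀ := by
    conv_lhs => rw [hC.spectral_theorem]
    rw [hofReal, Unitary.conjStarAlgAut_apply, hstar]
  have hspecT : T = W * Matrix.diagonal hT.eigenvalues * Wᵀ := by
    conv_lhs => rw [hT.spectral_theorem]
    rw [hofReal, Unitary.conjStarAlgAut_apply, hstar]
  have hdiagA : UAᵀ * (A * UA) = Matrix.diagonal a := by
    conv_lhs => rw [hspecA]
    calc UAᵀ * (UA * Matrix.diagonal a * UAᵀ * UA)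
        = (UAᵀ * UA) * Matrix.diagonal a * (UAᵀ * UA) := by
          simp only [Matrix.mul_assoc]
      _ = Matrix.diagonal a := by rw [hUA1]; simp
  have hdiagC : UCᵀ * (C * UC) = Matrix.diagonal c := by
    conv_lhs => rw [hspecC]
    calc UCᵀ * (UC * Matrix.diagonal c * UCᵀ * UC)
        = (UCᵀ * UC) * Matrix.diagonal c * (UCᵀ * UC) := by
          simp only [Matrix.mul_assoc]
      _ = Matrix.diagonal c := by rw [hUC1]; simp
  -- the three congruence matrices
  set P1 : Matrix ((Fin m ⊕ Fin g) ⊕ (Fin g ⊕ Fin n)) ((Fin m ⊕ Fin g) ⊕ (Fin g ⊕ Fin n)) ℝ :=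
    Matrix.fromBlocks (Matrix.fromBlocks 1 (-(A⁻¹*Bᵀ)) 0 1) 0 0
      (Matrix.fromBlocks 1 0 (-(C⁻¹*Dᵀ)) 1) with hP1def
  set Q1 : Matrix ((Fin m ⊕ Fin g) ⊕ (Fin g ⊕ Fin n)) ((Fin m ⊕ Fin g) ⊕ (Fin g ⊕ Fin n)) ℝ :=
    Matrix.fromBlocks (Matrix.fromBlocks 1 (A⁻¹*Bᵀ) 0 1) 0 0
      (Matrix.fromBlocks 1 0 (C⁻¹*Dᵀ) 1) with hQ1def
  set P2 : Matrix ((Fin m ⊕ Fin g) ⊕ (Fin g ⊕ Fin n)) ((Fin m ⊕ Fin g) ⊕ (Fin g ⊕ Fin n)) ℝ :=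
    Matrix.fromBlocks
      (Matrix.fromBlocks (1 : Matrix (Fin m) (Fin m) ℝ) 0 0 (1 : Matrix (Fin g) (Fin g) ℝ))
      (Matrix.fromBlocks 0 0 (1 : Matrix (Fin g) (Fin g) ℝ) 0)
      (Matrix.fromBlocks 0 (1 : Matrix (Fin g) (Fin g) ℝ) 0 0)
      (Matrix.fromBlocks (-1 : Matrix (Fin g) (Fin g) ℝ) 0 0 (1 : Matrix (Fin n) (Fin n) ℝ))
      with hP2def
  set Q2 : Matrix ((Fin m ⊕ Fin g) ⊕ (Fin g ⊕ Fin n)) ((Fin m ⊕ Fin g) ⊕ (Fin g ⊕ Fin n)) ℝ :=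
    Matrix.fromBlocks
      (Matrix.fromBlocks (1 : Matrix (Fin m) (Fin m) ℝ) 0 0
        (((1:ℝ)/2) • (1 : Matrix (Fin g) (Fin g) ℝ)))
      (Matrix.fromBlocks 0 0 (((1:ℝ)/2) • (1 : Matrix (Fin g) (Fin g) ℝ)) 0)
      (Matrix.fromBlocks 0 (((1:ℝ)/2) • (1 : Matrix (Fin g) (Fin g) ℝ)) 0 0)
      (Matrix.fromBlocks (-(((1:ℝ)/2) • (1 : Matrix (Fin g) (Fin g) ℝ))) 0 0
        (1 : Matrix (Fin n) (Fin n) ℝ)) with hQ2def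
  set P3 : Matrix ((Fin m ⊕ Fin g) ⊕ (Fin g ⊕ Fin n)) ((Fin m ⊕ Fin g) ⊕ (Fin g ⊕ Fin n)) ℝ :=
    Matrix.fromBlocks (Matrix.fromBlocks UA 0 0 1) 0 0 (Matrix.fromBlocks 1 0 0 UC) with hP3def
  set Q3 : Matrix ((Fin m ⊕ Fin g) ⊕ (Fin g ⊕ Fin n)) ((Fin m ⊕ Fin g) ⊕ (Fin g ⊕ Fin n)) ℝ :=
    Matrix.fromBlocks (Matrix.fromBlocks UAᵀ 0 0 1) 0 0 (Matrix.fromBlocks 1 0 0 UCᵀ)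
      with hQ3def
  -- intermediate matrices
  set S1 : Matrix ((Fin m ⊕ Fin g) ⊕ (Fin g ⊕ Fin n)) ((Fin m ⊕ Fin g) ⊕ (Fin g ⊕ Fin n)) ℝ :=
    Matrix.fromBlocks (Matrix.fromBlocks A 0 0 0) (Matrix.fromBlocks 0 0 (-1) 0)
      (Matrix.fromBlocks 0 (-1) 0 0) (Matrix.fromBlocks 0 0 0 C) with hS1def
  set S2 : Matrix ((Fin m ⊕ Fin g) ⊕ (Fin g ⊕ Fin n)) ((Fin m ⊕ Fin g) ⊕ (Fin g ⊕ Fin n)) ℝ :=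
    Matrix.fromBlocks
      (Matrix.fromBlocks A 0 0 (Matrix.diagonal fun _ => (-2:ℝ)))
      0 0
      (Matrix.fromBlocks (Matrix.diagonal fun _ => (2:ℝ)) 0 0 C) with hS2def
  set dT : ((Fin m ⊕ Fin g) ⊕ (Fin g ⊕ Fin n)) → ℝ :=
    Sum.elim (Sum.elim a fun _ => (-2:ℝ)) (Sum.elim (fun _ => (2:ℝ)) c) with hdTdef
  -- step 1
  have e1 : P1ᵀ * T * P1 = S1 := by
    rw [hP1def, hS1def, hTdef]
    show _ * glueMatrix A C B D * _ = _
    rw [glueMatrix]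
    simp [Matrix.fromBlocks_transpose, Matrix.fromBlocks_multiply, Matrix.transpose_neg,
      Matrix.transpose_mul, Matrix.mul_assoc, hA1, hAinv2, hC1, hC2, hAit, hCit, hCinv2]
  -- step 2
  have e2 : P2ᵀ * S1 * P2 = S2 := by
    rw [hP2def, hS1def, hS2def]
    have eg2 : (2 : Matrix (Fin g) (Fin g) ℝ) = 1 + 1 := by norm_num
    have h2 : (Matrix.diagonal fun _ => (-2:ℝ)) = (-2 : Matrix (Fin g) (Fin g) ℝ) := by
      rw [show (-2 : Matrix (Fin g) (Fin g) ℝ) = -(1+1) by rw [← eg2]]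
      ext i j; by_cases h : i = j <;> simp [Matrix.diagonal_apply, h] <;> norm_num
    have h3 : (Matrix.diagonal fun _ => (2:ℝ)) = (2 : Matrix (Fin g) (Fin g) ℝ) := by
      rw [eg2]; ext i j; by_cases h : i = j <;> simp [Matrix.diagonal_apply, h] <;> norm_num
    rw [h2, h3]
    simp [Matrix.fromBlocks_transpose, Matrix.fromBlocks_multiply, Matrix.fromBlocks_add,
      neg_one_smul, ← Matrix.fromBlocks_one]
    repeat' apply And.intro
    all_goals try abel
    all_goals
      (ext i j; by_cases h : i = j <;>
        simp [h, Matrix.one_apply, Matrix.smul_apply, ← Matrix.diagonal_ofNat,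
          Matrix.diagonal_apply] <;> norm_num)
  -- step 3
  have e3 : P3ᵀ * S2 * P3 = Matrix.diagonal dT := by
    rw [hP3def, hS2def, hdTdef]
    rw [← Matrix.fromBlocks_diagonal, ← Matrix.fromBlocks_diagonal, ← Matrix.fromBlocks_diagonal]
    simp only [Matrix.fromBlocks_transpose, Matrix.fromBlocks_multiply, Matrix.transpose_one,
      Matrix.mul_zero, Matrix.zero_mul, Matrix.mul_one, Matrix.one_mul, add_zero, zero_add,
      Matrix.transpose_zero, Matrix.mul_assoc]
    rw [hdiagA, hdiagC]
  -- inverses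
  have hP1Q1 : P1 * Q1 = 1 := by
    rw [hP1def, hQ1def, ← Matrix.fromBlocks_one, ← Matrix.fromBlocks_one,
      ← Matrix.fromBlocks_one]
    simp [Matrix.fromBlocks_multiply]
  have hP2Q2 : P2 * Q2 = 1 := by
    rw [hP2def, hQ2def, ← Matrix.fromBlocks_one, ← Matrix.fromBlocks_one,
      ← Matrix.fromBlocks_one]
    have hhalf : ((2:ℝ)⁻¹) • (1 : Matrix (Fin g) (Fin g) ℝ)
        + ((2:ℝ)⁻¹) • (1 : Matrix (Fin g) (Fin g) ℝ) = 1 := by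
      rw [← add_smul]; norm_num
    simp [Matrix.fromBlocks_multiply, Matrix.fromBlocks_add, hhalf]
  have hP3Q3 : P3 * Q3 = 1 := by
    rw [hP3def, hQ3def, ← Matrix.fromBlocks_one, ← Matrix.fromBlocks_one,
      ← Matrix.fromBlocks_one]
    simp [Matrix.fromBlocks_multiply, hUA2, hUC2]
  -- total congruence
  set R := P1 * (P2 * P3) with hRdef
  set Rinv := Q3 * (Q2 * Q1) with hRinvdef
  have hRRinv : R * Rinv = 1 := by
    rw [hRdef, hRinvdef]
    have c3 : ∀ X, P3 * (Q3 * X) = X := fun X => by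
      rw [← Matrix.mul_assoc, hP3Q3, Matrix.one_mul]
    have c2 : ∀ X, P2 * (Q2 * X) = X := fun X => by
      rw [← Matrix.mul_assoc, hP2Q2, Matrix.one_mul]
    calc P1 * (P2 * P3) * (Q3 * (Q2 * Q1))
        = P1 * (P2 * (P3 * (Q3 * (Q2 * Q1)))) := by simp only [Matrix.mul_assoc]
      _ = P1 * (P2 * (Q2 * Q1)) := by rw [c3]
      _ = P1 * Q1 := by rw [c2]
      _ = 1 := hP1Q1
  have hRT : Rᵀ * T * R = Matrix.diagonal dT := by
    have hassoc : Rᵀ * T * R = P3ᵀ * (P2ᵀ * (P1ᵀ * T * P1) * P2) * P3 := by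
      rw [hRdef]; simp only [Matrix.transpose_mul, Matrix.mul_assoc]
    rw [hassoc, e1, e2, e3]
  -- congruence between the two diagonal matrices
  set P := Wᵀ * R with hPdef
  set Q := Rinv * W with hQdef
  have hPQ : P * Q = 1 := by
    rw [hPdef, hQdef]
    calc Wᵀ * R * (Rinv * W) = Wᵀ * (R * Rinv * W) := by simp only [Matrix.mul_assoc]
      _ = Wᵀ * W := by rw [hRRinv, Matrix.one_mul]
      _ = 1 := hW1
  have hcong : Matrix.diagonal dT = Pᵀ * Matrix.diagonal hT.eigenvalues * P := by
    rw [hPdef]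
    have hPt : (Wᵀ * R)ᵀ = Rᵀ * W := by rw [Matrix.transpose_mul, Matrix.transpose_transpose]
    rw [hPt, ← hRT]
    conv_lhs => rw [hspecT]
    simp only [Matrix.mul_assoc]
  obtain ⟨hposC, hnegC⟩ :=
    sylvester_counts_eq hT.eigenvalues dT P Q hPQ hcong
  -- counting
  have hcard_pos : (Finset.univ.filter fun x => 0 < dT x).card
      = posEigCount hA + posEigCount hC + g := by
    rw [hdTdef, posEigCount, posEigCount]
    rw [Finset.card_filter, Fintype.sum_sum_type, Fintype.sum_sum_type, Fintype.sum_sum_type]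
    simp only [Sum.elim_inl, Sum.elim_inr]
    erw [← Finset.card_filter (fun i => 0 < a i), ← Finset.card_filter (fun i => 0 < c i)]
    norm_num [Finset.card_univ]
    rw [← ha, ← hc]
    omega
  have hcard_neg : (Finset.univ.filter fun x => dT x < 0).card
      = negEigCount hA + negEigCount hC + g := by
    rw [hdTdef, negEigCount, negEigCount]
    rw [Finset.card_filter, Fintype.sum_sum_type, Fintype.sum_sum_type, Fintype.sum_sum_type]
    simp only [Sum.elim_inl, Sum.elim_inr]
    erw [← Finset.card_filter (fun i => a i < 0), ← Finset.card_filter (fun i => c i < 0)]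
    norm_num [Finset.card_univ]
    rw [← ha, ← hc]
    omega
  constructor
  · rw [posEigCount, ← hposC]
    exact hcard_pos
  · rw [negEigCount, ← hnegC]
    exact hcard_neg
end

section
/- With T as in the previous block-matrix setting (A, C invertible real symmetric, T = [A, Bᵀ, 0, 0; B, BA⁻¹Bᵀ, -I, 0; 0, -I, DC⁻¹Dᵀ, D; 0, 0, Dᵀ, C]), if σ⁺ denotes the number of positive eigenvalues of T, σ⁺₁ that of A and σ⁺₂ that of C, then σ⁺₁ + σ⁺₂ + g − σ⁺ = 0. -/
open Matrix

section Aux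

set_option linter.unusedSectionVars false

open Finset

lemma card_filter_sum_univ {α β : Type*} [Fintype α] [Fintype β] (p : α ⊕ β → Prop)
    [DecidablePred p] :
    (Finset.univ.filter p).card
      = (Finset.univ.filter fun a => p (Sum.inl a)).card
        + (Finset.univ.filter fun b => p (Sum.inr b)).card := by
  rw [← Fintype.card_subtype, ← Fintype.card_subtype, ← Fintype.card_subtype, ← Fintype.card_sum]
  exact Fintype.card_congr Equiv.subtypeSum


variable {ι : Type*} [Fintype ι] [DecidableEq ι]

/-- Quadratic form of a matrix. -/
def qf (M : Matrix ι ι ℝ) (x : ι → ℝ) : ℝ := x ⬝ᵥ (M *ᵥ x)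

/-- Submodule of vectors supported on `s`. -/
def coordSub (s : Finset ι) : Submodule ℝ (ι → ℝ) where
  carrier := {x | ∀ i ∉ s, x i = 0}
  add_mem' := fun ha hb i hi => by simp [ha i hi, hb i hi]
  zero_mem' := fun i hi => rfl
  smul_mem' := fun c a ha i hi => by simp [ha i hi]

lemma mem_coordSub {s : Finset ι} {x : ι → ℝ} : x ∈ coordSub s ↔ ∀ i ∉ s, x i = 0 := Iff.rfl

noncomputable def coordSubEquiv (s : Finset ι) : coordSub s ≃ₗ[ℝ] (s → ℝ) where
  toFun := fun x i => (x : ι → ℝ) i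
  map_add' := fun a b => rfl
  map_smul' := fun c a => rfl
  invFun := fun y => ⟨fun i => if h : i ∈ s then y ⟨i, h⟩ else 0, fun i hi => by simp [hi]⟩
  left_inv := fun x => by
    ext i
    by_cases h : i ∈ s <;> simp [h, (mem_coordSub.mp x.2) i]
  right_inv := fun y => by ext i; simp [i.2]

lemma finrank_coordSub (s : Finset ι) : Module.finrank ℝ (coordSub s) = s.card := by
  rw [(coordSubEquiv s).finrank_eq]
  simp [Module.finrank_pi]


lemma real_star_eq_transpose (A : Matrix ι ι ℝ) : star A = Aᵀ := by
  rw [Matrix.star_eq_conjTranspose, Matrix.conjTranspose_eq_transpose_of_trivial]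

section eig
variable {M : Matrix ι ι ℝ} (hM : M.IsHermitian)

noncomputable def evU : Matrix ι ι ℝ := (hM.eigenvectorUnitary : Matrix ι ι ℝ)

lemma evU_star_mul : star (evU hM) * evU hM = 1 := by
  simpa [evU] using unitary.coe_star_mul_self hM.eigenvectorUnitary

lemma evU_mul_star : evU hM * star (evU hM) = 1 := by
  simpa [evU] using unitary.coe_mul_star_self hM.eigenvectorUnitary

lemma spec : M = evU hM * diagonal hM.eigenvalues * star (evU hM) := by
  have := hM.spectral_theorem
  rwa [RCLike.ofReal_real_eq_id, Function.id_comp] at this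

lemma qf_evU (c : ι → ℝ) :
    qf M (evU hM *ᵥ c) = ∑ i, hM.eigenvalues i * c i ^ 2 := by
  have h0 : M * evU hM = evU hM * diagonal hM.eigenvalues := by
    calc M * evU hM = (evU hM * diagonal hM.eigenvalues * star (evU hM)) * evU hM := by
          rw [← spec hM]
      _ = evU hM * diagonal hM.eigenvalues := by
          simp [Matrix.mul_assoc, evU_star_mul]
  have h1 : (evU hM)ᵀ * evU hM = 1 := by
    rw [← real_star_eq_transpose, evU_star_mul]
  calc qf M (evU hM *ᵥ c) = (evU hM *ᵥ c) ⬝ᵥ (evU hM *ᵥ (diagonal hM.eigenvalues *ᵥ c)) := by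
        rw [qf, mulVec_mulVec, h0, ← mulVec_mulVec]
    _ = c ⬝ᵥ (diagonal hM.eigenvalues *ᵥ c) := by
        rw [dotProduct_mulVec, vecMul_mulVec, h1, vecMul_one]
    _ = ∑ i, hM.eigenvalues i * c i ^ 2 := by
        simp [dotProduct, mulVec_diagonal]
        exact Finset.sum_congr rfl fun i _ => by ring

lemma mulVec_evU_eq_zero_iff (c : ι → ℝ) : evU hM *ᵥ c = 0 ↔ c = 0 := by
  constructor
  · intro h
    have := congrArg (fun v => star (evU hM) *ᵥ v) h
    simpa [mulVec_mulVec, evU_star_mul] using this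
  · rintro rfl; simp

end eig

noncomputable def mulVecEquiv (E E' : Matrix ι ι ℝ) (h1 : E * E' = 1) (h2 : E' * E = 1) :
    (ι → ℝ) ≃ₗ[ℝ] (ι → ℝ) :=
  LinearEquiv.ofLinear (Matrix.mulVecLin E) (Matrix.mulVecLin E')
    (by rw [← Matrix.mulVecLin_mul, h1, Matrix.mulVecLin_one])
    (by rw [← Matrix.mulVecLin_mul, h2, Matrix.mulVecLin_one])

@[simp] lemma mulVecEquiv_apply (E E' : Matrix ι ι ℝ) (h1 h2) (x : ι → ℝ) :
    mulVecEquiv E E' h1 h2 x = E *ᵥ x := rfl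

section eig2
variable {M : Matrix ι ι ℝ} (hM : M.IsHermitian)

lemma exists_posSub : ∃ W : Submodule ℝ (ι → ℝ),
    Module.finrank ℝ W = posEigCount hM ∧ ∀ x ∈ W, x ≠ 0 → 0 < qf M x := by
  classical
  set s : Finset ι := Finset.univ.filter fun i => 0 < hM.eigenvalues i with hs
  set e := mulVecEquiv (evU hM) (star (evU hM)) (evU_mul_star hM) (evU_star_mul hM) with he
  refine ⟨(coordSub s).map (e : (ι → ℝ) →ₗ[ℝ] ι → ℝ), ?_, ?_⟩
  · have h := LinearEquiv.finrank_map_eq e (coordSub s)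
    rw [finrank_coordSub] at h
    exact h
  · rintro x hx hx0
    obtain ⟨c, hc, rfl⟩ := Submodule.mem_map.mp hx
    have hc0 : c ≠ 0 := by
      intro h; exact hx0 (by simp [he, h])
    rw [he, LinearEquiv.coe_coe, mulVecEquiv_apply, qf_evU]
    obtain ⟨j, hj⟩ := Function.ne_iff.mp hc0
    have hjs : j ∈ s := by
      by_contra hjs; exact hj (mem_coordSub.mp hc j hjs)
    have hjpos : 0 < hM.eigenvalues j := (Finset.mem_filter.mp hjs).2
    apply Finset.sum_pos' ?_ ⟨j, Finset.mem_univ j, mul_pos hjpos (lt_of_le_of_ne (sq_nonneg _) (Ne.symm (pow_ne_zero 2 hj)))⟩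
    intro i _
    by_cases hi : i ∈ s
    · have := (Finset.mem_filter.mp hi).2; positivity
    · rw [mem_coordSub.mp hc i hi]; simp

lemma exists_nonposSub : ∃ W : Submodule ℝ (ι → ℝ),
    Module.finrank ℝ W = Fintype.card ι - posEigCount hM ∧ ∀ x ∈ W, qf M x ≤ 0 := by
  classical
  set s : Finset ι := Finset.univ.filter fun i => ¬ 0 < hM.eigenvalues i with hs
  set e := mulVecEquiv (evU hM) (star (evU hM)) (evU_mul_star hM) (evU_star_mul hM) with he
  refine ⟨(coordSub s).map (e : (ι → ℝ) →ₗ[ℝ] ι → ℝ), ?_, ?_⟩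
  · have h := LinearEquiv.finrank_map_eq e (coordSub s)
    rw [finrank_coordSub] at h
    refine h.trans ?_
    have := Finset.card_filter_add_card_filter_not (s := Finset.univ)
      (p := fun i => 0 < hM.eigenvalues i)
    simp only [Finset.card_univ] at this
    have h2 : posEigCount hM ≤ Fintype.card ι := by
      rw [show posEigCount hM = (Finset.univ.filter fun i => 0 < hM.eigenvalues i).card from rfl]
      exact le_trans (Finset.card_filter_le _ _) (by simp)
    have h3 : s.card = (Finset.univ.filter fun i => ¬ 0 < hM.eigenvalues i).card := by rw [hs]
    have h4 : posEigCount hM = (Finset.univ.filter fun i => 0 < hM.eigenvalues i).card := rfl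
    omega
  · rintro x hx
    obtain ⟨c, hc, rfl⟩ := Submodule.mem_map.mp hx
    rw [he, LinearEquiv.coe_coe, mulVecEquiv_apply, qf_evU]
    apply Finset.sum_nonpos
    intro i _
    by_cases hi : i ∈ s
    · have hle : hM.eigenvalues i ≤ 0 := by
        have := (Finset.mem_filter.mp hi).2; linarith [not_lt.mp this]
      have : (0:ℝ) ≤ c i ^ 2 := sq_nonneg _
      exact mul_nonpos_of_nonpos_of_nonneg hle this
    · rw [mem_coordSub.mp hc i hi]; simp

lemma finrank_le_posEigCount (W : Submodule ℝ (ι → ℝ))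
    (hpos : ∀ x ∈ W, x ≠ 0 → 0 < qf M x) :
    Module.finrank ℝ W ≤ posEigCount hM := by
  by_contra h
  push_neg at h
  obtain ⟨W', hW'rank, hW'⟩ := exists_nonposSub hM
  have hsum := Submodule.finrank_sup_add_finrank_inf_eq W W'
  have hle : Module.finrank ℝ ↥(W ⊔ W') ≤ Fintype.card ι := by
    have := Submodule.finrank_le (W ⊔ W')
    simpa [Module.finrank_pi] using this
  have hp : posEigCount hM ≤ Fintype.card ι :=
    le_trans (Finset.card_filter_le _ _) (by simp)
  have hinf : 0 < Module.finrank ℝ ↥(W ⊓ W') := by omega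
  have hbot : W ⊓ W' ≠ ⊥ := by
    intro hb
    rw [hb] at hinf
    simp at hinf
  obtain ⟨x, hxmem, hx0⟩ := Submodule.exists_mem_ne_zero_of_ne_bot hbot
  have h1 := hpos x (Submodule.mem_inf.mp hxmem).1 hx0
  have h2 := hW' x (Submodule.mem_inf.mp hxmem).2
  linarith

lemma posEigCount_le (W' : Submodule ℝ (ι → ℝ))
    (hW' : ∀ x ∈ W', qf M x ≤ 0) :
    posEigCount hM + Module.finrank ℝ W' ≤ Fintype.card ι := by
  by_contra h
  push_neg at h
  obtain ⟨W, hWrank, hW⟩ := exists_posSub hM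
  have hsum := Submodule.finrank_sup_add_finrank_inf_eq W W'
  have hle : Module.finrank ℝ ↥(W ⊔ W') ≤ Fintype.card ι := by
    have := Submodule.finrank_le (W ⊔ W')
    simpa [Module.finrank_pi] using this
  have hinf : 0 < Module.finrank ℝ ↥(W ⊓ W') := by omega
  have hbot : W ⊓ W' ≠ ⊥ := by
    intro hb; rw [hb] at hinf; simp at hinf
  obtain ⟨x, hxmem, hx0⟩ := Submodule.exists_mem_ne_zero_of_ne_bot hbot
  have h1 := hW x (Submodule.mem_inf.mp hxmem).1 hx0
  have h2 := hW' x (Submodule.mem_inf.mp hxmem).2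
  linarith

end eig2

lemma qf_congr_eq (M E : Matrix ι ι ℝ) (x : ι → ℝ) :
    qf (E * M * Eᵀ) x = qf M (Eᵀ *ᵥ x) := by
  rw [qf, qf, ← mulVec_mulVec, ← mulVec_mulVec, dotProduct_mulVec, ← mulVec_transpose]

lemma posEigCount_le_congr {M M' E E' : Matrix ι ι ℝ} (hM : M.IsHermitian)
    (hM' : M'.IsHermitian) (h1 : E * E' = 1) (h2 : E' * E = 1) (hc : M' = E * M * Eᵀ) :
    posEigCount hM ≤ posEigCount hM' := by
  obtain ⟨W, hWrank, hW⟩ := exists_posSub hM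
  have h1' : E'ᵀ * Eᵀ = 1 := by rw [← Matrix.transpose_mul, h1, Matrix.transpose_one]
  have h2' : Eᵀ * E'ᵀ = 1 := by rw [← Matrix.transpose_mul, h2, Matrix.transpose_one]
  set e := mulVecEquiv E'ᵀ Eᵀ h1' h2' with he
  have key : Module.finrank ℝ (W.map (e : (ι → ℝ) →ₗ[ℝ] ι → ℝ)) ≤ posEigCount hM' := by
    apply finrank_le_posEigCount hM'
    rintro x hx hx0
    obtain ⟨w, hw, rfl⟩ := Submodule.mem_map.mp hx
    have hw0 : w ≠ 0 := by
      intro h; exact hx0 (by simp [he, h])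
    rw [hc, qf_congr_eq]
    have : Eᵀ *ᵥ (e w) = w := by
      simp [he, mulVec_mulVec, h2']
    rw [LinearEquiv.coe_coe, show (e w : ι → ℝ) = E'ᵀ *ᵥ w from rfl, mulVec_mulVec, h2', one_mulVec]
    exact hW w hw hw0
  calc posEigCount hM = Module.finrank ℝ (W.map (e : (ι → ℝ) →ₗ[ℝ] ι → ℝ)) :=
        ((LinearEquiv.finrank_map_eq e W).trans hWrank).symm
    _ ≤ posEigCount hM' := key

lemma posEigCount_congr {M M' E E' : Matrix ι ι ℝ} (hM : M.IsHermitian)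
    (hM' : M'.IsHermitian) (h1 : E * E' = 1) (h2 : E' * E = 1) (hc : M' = E * M * Eᵀ) :
    posEigCount hM' = posEigCount hM := by
  refine le_antisymm ?_ (posEigCount_le_congr hM hM' h1 h2 hc)
  apply posEigCount_le_congr hM' hM h2 h1
  rw [hc]
  rw [← Matrix.mul_assoc, ← Matrix.mul_assoc, h2, Matrix.one_mul, Matrix.mul_assoc,
    ← Matrix.transpose_mul, h2, Matrix.transpose_one, Matrix.mul_one]

lemma qf_diagonal (d : ι → ℝ) (x : ι → ℝ) :
    qf (diagonal d) x = ∑ i, d i * x i ^ 2 := by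
  simp only [qf, dotProduct, mulVec_diagonal]
  exact Finset.sum_congr rfl fun i _ => by ring

lemma posEigCount_diagonal (d : ι → ℝ) (h : (Matrix.diagonal d).IsHermitian) :
    posEigCount h = (Finset.univ.filter fun i => 0 < d i).card := by
  classical
  have hge : (Finset.univ.filter fun i => 0 < d i).card ≤ posEigCount h := by
    have := finrank_le_posEigCount h (coordSub (Finset.univ.filter fun i => 0 < d i)) ?_
    · rwa [finrank_coordSub] at this
    · intro x hx hx0
      rw [qf_diagonal]
      obtain ⟨j, hj⟩ := Function.ne_iff.mp hx0
      have hjs : j ∈ Finset.univ.filter fun i => 0 < d i := by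
        by_contra hjs; exact hj (mem_coordSub.mp hx j hjs)
      have hjpos : 0 < d j := (Finset.mem_filter.mp hjs).2
      apply Finset.sum_pos' ?_ ⟨j, Finset.mem_univ j,
        mul_pos hjpos (lt_of_le_of_ne (sq_nonneg _) (Ne.symm (pow_ne_zero 2 hj)))⟩
      intro i _
      by_cases hi : i ∈ Finset.univ.filter fun i => 0 < d i
      · have := (Finset.mem_filter.mp hi).2; positivity
      · rw [mem_coordSub.mp hx i hi]; simp
  have hle : posEigCount h ≤ (Finset.univ.filter fun i => 0 < d i).card := by
    have hB := posEigCount_le h (coordSub (Finset.univ.filter fun i => ¬ 0 < d i)) ?_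
    · rw [finrank_coordSub] at hB
      have := Finset.card_filter_add_card_filter_not (s := Finset.univ)
        (p := fun i => 0 < d i)
      simp only [Finset.card_univ] at this
      omega
    · intro x hx
      rw [qf_diagonal]
      apply Finset.sum_nonpos
      intro i _
      by_cases hi : i ∈ Finset.univ.filter fun i => ¬ 0 < d i
      · have hle : d i ≤ 0 := not_lt.mp (Finset.mem_filter.mp hi).2
        exact mul_nonpos_of_nonpos_of_nonneg hle (sq_nonneg _)
      · rw [mem_coordSub.mp hx i hi]; simp
  omega

end Aux

theorem stmt_6 (m n g : ℕ)
    (A : Matrix (Fin m) (Fin m) ℝ) (hA : A.IsHermitian) (hAu : IsUnit A.det)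
    (C : Matrix (Fin n) (Fin n) ℝ) (hC : C.IsHermitian) (hCu : IsUnit C.det)
    (B : Matrix (Fin g) (Fin m) ℝ) (D : Matrix (Fin g) (Fin n) ℝ)
    (hT : (glueMatrix A C B D).IsHermitian) :
    (posEigCount hA : ℤ) + (posEigCount hC : ℤ) + (g : ℤ) - (posEigCount hT : ℤ) = 0 := by

  have hAt : Aᵀ = A := by
    rw [← Matrix.conjTranspose_eq_transpose_of_trivial]; exact hA
  have hCt : Cᵀ = C := by
    rw [← Matrix.conjTranspose_eq_transpose_of_trivial]; exact hC
  have hA1 : A⁻¹ * A = 1 := Matrix.nonsing_inv_mul A hAu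
  have hA2 : A * A⁻¹ = 1 := Matrix.mul_nonsing_inv A hAu
  have hC1 : C⁻¹ * C = 1 := Matrix.nonsing_inv_mul C hCu
  have hC2 : C * C⁻¹ = 1 := Matrix.mul_nonsing_inv C hCu
  have hAit : A⁻¹ᵀ = A⁻¹ := by rw [Matrix.transpose_nonsing_inv, hAt]
  have hCit : C⁻¹ᵀ = C⁻¹ := by rw [Matrix.transpose_nonsing_inv, hCt]
  set E₁ : Matrix ((Fin m ⊕ Fin g) ⊕ (Fin g ⊕ Fin n)) ((Fin m ⊕ Fin g) ⊕ (Fin g ⊕ Fin n)) ℝ :=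
    fromBlocks (fromBlocks 1 0 (-(B * A⁻¹)) 1) 0 0 (fromBlocks 1 (-(D * C⁻¹)) 0 1) with hE₁def
  set E₁' : Matrix ((Fin m ⊕ Fin g) ⊕ (Fin g ⊕ Fin n)) ((Fin m ⊕ Fin g) ⊕ (Fin g ⊕ Fin n)) ℝ :=
    fromBlocks (fromBlocks 1 0 (B * A⁻¹) 1) 0 0 (fromBlocks 1 (D * C⁻¹) 0 1) with hE₁'def
  have hE₁1 : E₁ * E₁' = 1 := by
    simp [hE₁def, hE₁'def, Matrix.fromBlocks_multiply, ← Matrix.fromBlocks_one]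
  have hE₁2 : E₁' * E₁ = 1 := by
    simp [hE₁def, hE₁'def, Matrix.fromBlocks_multiply, ← Matrix.fromBlocks_one]
  set S : Matrix ((Fin m ⊕ Fin g) ⊕ (Fin g ⊕ Fin n)) ((Fin m ⊕ Fin g) ⊕ (Fin g ⊕ Fin n)) ℝ :=
    fromBlocks (fromBlocks A 0 0 0) (fromBlocks 0 0 (-1) 0)
      (fromBlocks 0 (-1) 0 0) (fromBlocks 0 0 0 C) with hSdef
  have hc1 : S = E₁ * glueMatrix A C B D * E₁ᵀ := by
    rw [hE₁def, hSdef, glueMatrix]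
    simp only [Matrix.fromBlocks_transpose, Matrix.fromBlocks_multiply, Matrix.transpose_neg,
      Matrix.transpose_mul, Matrix.transpose_one, Matrix.transpose_zero, hAit, hCit,
      Matrix.mul_one, Matrix.one_mul, Matrix.mul_zero, Matrix.zero_mul, add_zero, zero_add,
      Matrix.neg_mul, Matrix.mul_neg, neg_neg]
    rw [show B * A⁻¹ * A = B by rw [Matrix.mul_assoc, hA1, Matrix.mul_one],
        show A * (A⁻¹ * Bᵀ) = Bᵀ by rw [← Matrix.mul_assoc, hA2, Matrix.one_mul],
        show D * C⁻¹ * C = D by rw [Matrix.mul_assoc, hC1, Matrix.mul_one],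
        show C * (C⁻¹ * Dᵀ) = Dᵀ by rw [← Matrix.mul_assoc, hC2, Matrix.one_mul]]
    simp
  set E₂ : Matrix ((Fin m ⊕ Fin g) ⊕ (Fin g ⊕ Fin n)) ((Fin m ⊕ Fin g) ⊕ (Fin g ⊕ Fin n)) ℝ :=
    fromBlocks (fromBlocks 1 0 0 1) (fromBlocks 0 0 1 0)
      (fromBlocks 0 (-1) 0 0) (fromBlocks 1 0 0 1) with hE₂def
  set E₂' : Matrix ((Fin m ⊕ Fin g) ⊕ (Fin g ⊕ Fin n)) ((Fin m ⊕ Fin g) ⊕ (Fin g ⊕ Fin n)) ℝ :=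
    fromBlocks (fromBlocks 1 0 0 (((1:ℝ)/2) • 1)) (fromBlocks 0 0 (-(((1:ℝ)/2) • 1)) 0)
      (fromBlocks 0 (((1:ℝ)/2) • 1) 0 0) (fromBlocks (((1:ℝ)/2) • 1) 0 0 1) with hE₂'def
  have hE₂1 : E₂ * E₂' = 1 := by
    rw [hE₂def, hE₂'def]
    norm_num [Matrix.fromBlocks_multiply, Matrix.fromBlocks_add, ← add_smul, Matrix.fromBlocks_one]
  have hE₂2 : E₂' * E₂ = 1 := by
    rw [hE₂def, hE₂'def]
    norm_num [Matrix.fromBlocks_multiply, Matrix.fromBlocks_add, ← add_smul, Matrix.fromBlocks_one]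
  set S₂ : Matrix ((Fin m ⊕ Fin g) ⊕ (Fin g ⊕ Fin n)) ((Fin m ⊕ Fin g) ⊕ (Fin g ⊕ Fin n)) ℝ :=
    fromBlocks (fromBlocks A 0 0 ((-2 : ℝ) • 1)) 0 0 (fromBlocks ((2:ℝ) • 1) 0 0 C) with hS₂def
  have hc2 : S₂ = E₂ * S * E₂ᵀ := by
    rw [hE₂def, hS₂def, hSdef]
    norm_num [Matrix.fromBlocks_multiply, Matrix.fromBlocks_add, Matrix.fromBlocks_transpose]
    rw [two_smul, one_add_one_eq_two]
  have hdiagA : star (evU hA) * A * evU hA = diagonal hA.eigenvalues := by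
    have := hA.conjStarAlgAut_star_eigenvectorUnitary
    simp only [Unitary.conjStarAlgAut_apply, star_star] at this
    rwa [RCLike.ofReal_real_eq_id, Function.id_comp] at this
  have hdiagC : star (evU hC) * C * evU hC = diagonal hC.eigenvalues := by
    have := hC.conjStarAlgAut_star_eigenvectorUnitary
    simp only [Unitary.conjStarAlgAut_apply, star_star] at this
    rwa [RCLike.ofReal_real_eq_id, Function.id_comp] at this
  have hstA : (star (evU hA))ᵀ = evU hA := by
    rw [real_star_eq_transpose, Matrix.transpose_transpose]
  have hstC : (star (evU hC))ᵀ = evU hC := by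
    rw [real_star_eq_transpose, Matrix.transpose_transpose]
  set E₃ : Matrix ((Fin m ⊕ Fin g) ⊕ (Fin g ⊕ Fin n)) ((Fin m ⊕ Fin g) ⊕ (Fin g ⊕ Fin n)) ℝ :=
    fromBlocks (fromBlocks (star (evU hA)) 0 0 1) 0 0 (fromBlocks 1 0 0 (star (evU hC)))
    with hE₃def
  set E₃' : Matrix ((Fin m ⊕ Fin g) ⊕ (Fin g ⊕ Fin n)) ((Fin m ⊕ Fin g) ⊕ (Fin g ⊕ Fin n)) ℝ :=
    fromBlocks (fromBlocks (evU hA) 0 0 1) 0 0 (fromBlocks 1 0 0 (evU hC)) with hE₃'def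
  have hE₃1 : E₃ * E₃' = 1 := by
    rw [hE₃def, hE₃'def]
    norm_num [Matrix.fromBlocks_multiply, Matrix.fromBlocks_add, evU_star_mul, evU_mul_star,
      Matrix.fromBlocks_one]
  have hE₃2 : E₃' * E₃ = 1 := by
    rw [hE₃def, hE₃'def]
    norm_num [Matrix.fromBlocks_multiply, Matrix.fromBlocks_add, evU_star_mul, evU_mul_star,
      Matrix.fromBlocks_one]
  set d : ((Fin m ⊕ Fin g) ⊕ (Fin g ⊕ Fin n)) → ℝ :=
    Sum.elim (Sum.elim hA.eigenvalues fun _ => (-2:ℝ))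
      (Sum.elim (fun _ => (2:ℝ)) hC.eigenvalues) with hddef
  have hc3 : Matrix.diagonal d = E₃ * S₂ * E₃ᵀ := by
    rw [hE₃def, hS₂def, hddef, ← Matrix.fromBlocks_diagonal, ← Matrix.fromBlocks_diagonal,
      ← Matrix.fromBlocks_diagonal]
    norm_num [Matrix.fromBlocks_multiply, Matrix.fromBlocks_add, Matrix.fromBlocks_transpose,
      hstA, hstC, hdiagA, hdiagC, Matrix.smul_one_eq_diagonal]
  have hS : S.IsHermitian := by
    rw [hc1]
    have := Matrix.isHermitian_mul_mul_conjTranspose E₁ hT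
    rwa [Matrix.conjTranspose_eq_transpose_of_trivial] at this
  have hS₂ : S₂.IsHermitian := by
    rw [hc2]
    have := Matrix.isHermitian_mul_mul_conjTranspose E₂ hS
    rwa [Matrix.conjTranspose_eq_transpose_of_trivial] at this
  have hΔ : (Matrix.diagonal d).IsHermitian := Matrix.isHermitian_diagonal d
  have e1 : posEigCount hS = posEigCount hT := posEigCount_congr hT hS hE₁1 hE₁2 hc1
  have e2 : posEigCount hS₂ = posEigCount hS := posEigCount_congr hS hS₂ hE₂1 hE₂2 hc2
  have e3 : posEigCount hΔ = posEigCount hS₂ := posEigCount_congr hS₂ hΔ hE₃1 hE₃2 hc3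
  have e4 : posEigCount hΔ = (Finset.univ.filter fun i => 0 < d i).card :=
    posEigCount_diagonal d hΔ
  have e5 : (Finset.univ.filter fun i => 0 < d i).card
      = posEigCount hA + posEigCount hC + g := by
    rw [card_filter_sum_univ, card_filter_sum_univ, card_filter_sum_univ]
    have c1 : (Finset.univ.filter fun a : Fin g => 0 < d (Sum.inl (Sum.inr a))).card = 0 := by
      rw [hddef]
      simp only [Sum.elim_inl, Sum.elim_inr]
      norm_num
    have c2 : (Finset.univ.filter fun a : Fin g => 0 < d (Sum.inr (Sum.inl a))).card = g := by
      rw [hddef]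
      simp only [Sum.elim_inl, Sum.elim_inr]
      norm_num
    have c3 : (Finset.univ.filter fun a : Fin m => 0 < d (Sum.inl (Sum.inl a))).card
        = posEigCount hA := by
      rw [hddef]; simp only [Sum.elim_inl]; rfl
    have c4 : (Finset.univ.filter fun a : Fin n => 0 < d (Sum.inr (Sum.inr a))).card
        = posEigCount hC := by
      rw [hddef]; simp only [Sum.elim_inr]; rfl
    rw [c1, c2, c3, c4]
    ring
  have : posEigCount hT = posEigCount hA + posEigCount hC + g := by omega
  omega
end
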